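/- (Key extraction lemma for Theorem 2 of the paper, eq. (40).) Let R be an n×n complex positive semidefinite matrix and h ∈ ℂ^n a vector with hᴴ·R·h ≠ 0 (note hᴴ·R·h is a nonnegative real number). Define the vector w = (hᴴ·R·h)^{−1/2} · R·h. Then |hᴴ·w|² = hᴴ·R·h, and the matrix R − w·wᴴ is positive semidefinite. -/

import Mathlib

open Matrix ComplexOrder

section aux

open scoped InnerProductSpace

/-- Cauchy–Schwarz for a PSD quadratic form. -/
lemma psd_cauchy_schwarz {n : ℕ} (R : Matrix (Fin n) (Fin n) ℂ) (hR : R.PosSemidef)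
    (x y : Fin n → ℂ) :
    ‖star x ⬝ᵥ R.mulVec y‖ ^ 2 ≤ (star x ⬝ᵥ R.mulVec x).re * (star y ⬝ᵥ R.mulVec y).re := by
  obtain ⟨S, hSh, hSS⟩ : ∃ S : Matrix (Fin n) (Fin n) ℂ, S.IsHermitian ∧ S * S = R := by
    open scoped MatrixOrder in
    exact ⟨CFC.sqrt R, (CFC.sqrt_nonneg R).posSemidef.isHermitian, CFC.sqrt_mul_sqrt_self R hR.nonneg⟩
  have key : ∀ a b : Fin n → ℂ,
      star a ⬝ᵥ R.mulVec b = star (S.mulVec a) ⬝ᵥ (S.mulVec b) := by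
    intro a b
    rw [star_mulVec, dotProduct_mulVec (star a ᵥ* S.conjTranspose), vecMul_vecMul,
      hSh.eq, ← dotProduct_mulVec, hSS]
  have inner_eq : ∀ a b : Fin n → ℂ,
      star a ⬝ᵥ b = ⟪(WithLp.equiv 2 _).symm a, (WithLp.equiv 2 _).symm b⟫_ℂ := by
    intro a b
    rw [dotProduct_comm]; rfl
  set u : EuclideanSpace ℂ (Fin n) := (WithLp.equiv 2 _).symm (S.mulVec x)
  set v : EuclideanSpace ℂ (Fin n) := (WithLp.equiv 2 _).symm (S.mulVec y)
  have h1 : star x ⬝ᵥ R.mulVec y = ⟪u, v⟫_ℂ := by rw [key]; exact inner_eq _ _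
  have h2 : star x ⬝ᵥ R.mulVec x = ⟪u, u⟫_ℂ := by rw [key]; exact inner_eq _ _
  have h3 : star y ⬝ᵥ R.mulVec y = ⟪v, v⟫_ℂ := by rw [key]; exact inner_eq _ _
  rw [h1, h2, h3]
  have := norm_inner_le_norm (𝕜 := ℂ) u v
  have hu : (⟪u, u⟫_ℂ).re = ‖u‖ ^ 2 := by
    rw [← inner_self_eq_norm_sq (𝕜 := ℂ)]; rfl
  have hv : (⟪v, v⟫_ℂ).re = ‖v‖ ^ 2 := by
    rw [← inner_self_eq_norm_sq (𝕜 := ℂ)]; rfl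
  rw [hu, hv]
  calc ‖⟪u, v⟫_ℂ‖ ^ 2 ≤ (‖u‖ * ‖v‖) ^ 2 := by
        apply pow_le_pow_left₀ (norm_nonneg _) this
    _ = ‖u‖ ^ 2 * ‖v‖ ^ 2 := by ring

end aux

/-- Extraction lemma (eq. (40)): for `R ⪰ 0` with `hᴴ·R·h ≠ 0`, the beamformer
`w = (hᴴ·R·h)^{-1/2}·R·h` satisfies `|hᴴ·w|² = hᴴ·R·h` and `R − w·wᴴ ⪰ 0`. -/
theorem beamformer_extraction
    {n : ℕ} (R : Matrix (Fin n) (Fin n) ℂ) (hR : R.PosSemidef)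
    (h : Fin n → ℂ) (hne : star h ⬝ᵥ R.mulVec h ≠ 0)
    (w : Fin n → ℂ)
    (hw : w = fun i => (star h ⬝ᵥ R.mulVec h) ^ (-(1 / 2) : ℂ) * R.mulVec h i) :
    ((‖star h ⬝ᵥ w‖ : ℂ)) ^ 2 = star h ⬝ᵥ R.mulVec h ∧
      (R - Matrix.vecMulVec w (star w)).PosSemidef := by
  set q : ℂ := star h ⬝ᵥ R.mulVec h with hq
  have hq0 : 0 ≤ q := hR.dotProduct_mulVec_nonneg h
  obtain ⟨hre, him⟩ := Complex.nonneg_iff.mp hq0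
  set r : ℝ := q.re with hrq
  have hqr : q = (r : ℂ) := by
    apply Complex.ext <;> simp [him, hrq]
  have hr : 0 < r := by
    rcases lt_or_eq_of_le hre with h' | h'
    · exact h'
    · exact absurd (by rw [hqr, ← h']; simp) hne
  set s : ℝ := r ^ (-(1 / 2) : ℝ) with hs
  have hs0 : 0 < s := Real.rpow_pos_of_pos hr _
  have hc : q ^ (-(1 / 2) : ℂ) = (s : ℂ) := by
    rw [hqr, hs, Complex.ofReal_cpow hr.le]
    push_cast
    ring_nf
  have hss : s * s = r⁻¹ := by
    rw [hs, ← Real.rpow_add hr]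
    norm_num
    rw [show (-1 : ℝ) = ((-1 : ℤ) : ℝ) by norm_num, Real.rpow_intCast, _root_.zpow_neg_one]
  -- part 1
  have hhw : star h ⬝ᵥ w = (s : ℂ) * q := by
    rw [hw]
    have : (fun i => q ^ (-(1 / 2) : ℂ) * (R.mulVec h) i)
        = q ^ (-(1 / 2) : ℂ) • (R.mulVec h) := rfl
    rw [this, dotProduct_smul, smul_eq_mul, hc, hq]
  have hnorm : (‖star h ⬝ᵥ w‖ : ℂ) ^ 2 = q := by
    rw [hhw, hqr]
    rw [show (s:ℂ) * (r:ℂ) = ((s*r : ℝ) : ℂ) by push_cast; ring]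
    rw [Complex.norm_real, Real.norm_of_nonneg (by positivity)]
    rw [← Complex.ofReal_pow]
    congr 1
    have : (s * r) ^ 2 = (s * s) * (r * r) := by ring
    rw [this, hss]
    field_simp
  refine ⟨hnorm, posSemidef_iff_dotProduct_mulVec.mpr ⟨?_, ?_⟩⟩
  · -- Hermitian
    have hRh : R.IsHermitian := hR.1
    have : (Matrix.vecMulVec w (star w)).IsHermitian := by
      ext i j
      simp [Matrix.conjTranspose_apply, Matrix.vecMulVec_apply, mul_comm]
    exact hRh.sub this
  · intro z
    have hWz : star z ⬝ᵥ (Matrix.vecMulVec w (star w)).mulVec z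
        = (star z ⬝ᵥ w) * (star w ⬝ᵥ z) := by
      simp only [Matrix.mulVec, Matrix.vecMulVec_apply, dotProduct, Finset.mul_sum,
        Finset.sum_mul]
      rw [Finset.sum_comm]
      congr 1; ext i; congr 1; ext j; ring
    have hconj : star w ⬝ᵥ z = starRingEnd ℂ (star z ⬝ᵥ w) := by
      simp [dotProduct, map_sum, mul_comm]
    have hzw : star z ⬝ᵥ w = (s : ℂ) * (star z ⬝ᵥ R.mulVec h) := by
      rw [hw]
      have : (fun i => q ^ (-(1 / 2) : ℂ) * (R.mulVec h) i)
          = q ^ (-(1 / 2) : ℂ) • (R.mulVec h) := rfl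
      rw [this, dotProduct_smul, smul_eq_mul, hc]
    have hprod : (star z ⬝ᵥ w) * (star w ⬝ᵥ z)
        = ((‖star z ⬝ᵥ w‖ ^ 2 : ℝ) : ℂ) := by
      rw [hconj, Complex.mul_conj']
      push_cast
      ring
    have hnw : ‖star z ⬝ᵥ w‖ ^ 2 = r⁻¹ * ‖star z ⬝ᵥ R.mulVec h‖ ^ 2 := by
      rw [hzw, norm_mul, mul_pow, Complex.norm_real,
        Real.norm_of_nonneg hs0.le, ← hss]
      ring
    have hcs := psd_cauchy_schwarz R hR z h
    have hzz : 0 ≤ star z ⬝ᵥ R.mulVec z := hR.dotProduct_mulVec_nonneg z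
    obtain ⟨hzre, hzim⟩ := Complex.nonneg_iff.mp hzz
    have hzzr : star z ⬝ᵥ R.mulVec z = ((star z ⬝ᵥ R.mulVec z).re : ℂ) := by
      apply Complex.ext <;> simp [hzim]
    have hreal : r⁻¹ * ‖star z ⬝ᵥ R.mulVec h‖ ^ 2 ≤ (star z ⬝ᵥ R.mulVec z).re := by
      rw [inv_mul_le_iff₀ hr, mul_comm]
      simpa [← hq, ← hrq] using hcs
    have : star z ⬝ᵥ (R - Matrix.vecMulVec w (star w)).mulVec z
        = star z ⬝ᵥ R.mulVec z - star z ⬝ᵥ (Matrix.vecMulVec w (star w)).mulVec z := by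
      simp [Matrix.sub_mulVec, dotProduct_sub]
    rw [this, hWz, hprod, hnw, hzzr]
    rw [← Complex.ofReal_sub]
    rw [Complex.zero_le_real]
    linarith
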